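/- Let q be real with 0 < q < 1, let α ∈ ℂ, let β ∈ ℂ be nonzero, let n ∈ ℕ, and let R be real with 0 < R < 1/|β|. Then (1/(2πi)) ∮_{|y|=R} y^{−n} · [(α y ; q)_∞ / (β y ; q)_∞] · dy/y = β^n · [∏_{m=0}^{n−1} (1 − q^m α/β)] / [∏_{m=1}^{n} (1 − q^m)]. -/

import Mathlib

set_option maxHeartbeats 1000000

/-- The q-Pochhammer symbol `(z;q)_∞ = ∏_{i=0}^∞ (1 - z qⁱ)`. -/
noncomputable def qPochInf (q : ℝ) (z : ℂ) : ℂ := ∏' i : ℕ, (1 - z * (q : ℂ) ^ i)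

noncomputable def Complex.abs : AbsoluteValue ℂ ℝ := IsAbsoluteValue.toAbsoluteValue (norm : ℂ → ℝ)

lemma Complex.norm_eq_abs (z : ℂ) : ‖z‖ = Complex.abs z := rfl

lemma Complex.abs_ofReal (r : ℝ) : Complex.abs (r : ℂ) = |r| := Complex.norm_real r

lemma Complex.abs_I : Complex.abs Complex.I = 1 := Complex.norm_I

lemma Complex.continuous_abs : Continuous Complex.abs := continuous_norm

lemma abs_circleMap_zero (R θ : ℝ) : Complex.abs (circleMap 0 R θ) = |R| := norm_circleMap_zero R θ

namespace Stmt17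

open Complex Filter Finset Topology

/-! ### Basic facts about the factors -/

lemma abs_qpow_le {q : ℝ} (hq0 : 0 < q) (hq1 : q < 1) (i : ℕ) :
    Complex.abs ((q : ℂ) ^ i) ≤ 1 := by
  rw [map_pow, Complex.abs_ofReal, abs_of_pos hq0]
  exact pow_le_one₀ hq0.le hq1.le

lemma factor_ne {q : ℝ} (hq0 : 0 < q) (hq1 : q < 1) {z : ℂ} (hz : Complex.abs z < 1) (i : ℕ) :
    (1 : ℂ) - z * (q : ℂ) ^ i ≠ 0 := by
  intro h
  have h1 : z * (q : ℂ) ^ i = 1 := by linear_combination -h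
  have h2 : Complex.abs (z * (q : ℂ) ^ i) = 1 := by rw [h1]; simp
  have h3 : Complex.abs (z * (q : ℂ) ^ i) < 1 := by
    rw [map_mul]
    calc Complex.abs z * Complex.abs ((q : ℂ) ^ i) ≤ Complex.abs z * 1 := by
          gcongr; exact abs_qpow_le hq0 hq1 i
      _ < 1 := by simpa using hz
  rw [h2] at h3; exact lt_irrefl 1 h3

lemma summable_log {q : ℝ} (hq0 : 0 < q) (hq1 : q < 1) (z : ℂ) :
    Summable fun i : ℕ => Complex.log (1 - z * (q : ℂ) ^ i) := by
  obtain ⟨N, hN⟩ : ∃ N : ℕ, Complex.abs z * q ^ N ≤ 1 / 2 := by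
    have h := Tendsto.const_mul (Complex.abs z)
      (tendsto_pow_atTop_nhds_zero_of_lt_one hq0.le hq1)
    rw [mul_zero] at h
    exact (h.eventually_le_const (by norm_num : (0:ℝ) < 1/2)).exists
  rw [← summable_nat_add_iff N]
  have key : ∀ i : ℕ, ‖z * (q : ℂ) ^ (i + N)‖ ≤ (1 / 2) * q ^ i := by
    intro i
    have h0 : ‖z * (q : ℂ) ^ (i + N)‖ = Complex.abs z * q ^ N * q ^ i := by
      rw [norm_mul, Complex.norm_eq_abs, Complex.norm_eq_abs, map_pow, Complex.abs_ofReal,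
        abs_of_pos hq0, pow_add]
      ring
    rw [h0]
    exact mul_le_mul_of_nonneg_right hN (by positivity)
  refine Summable.of_norm_bounded (g := fun i => 3 / 2 * ((1 / 2) * q ^ i))
    (((summable_geometric_of_lt_one hq0.le hq1).mul_left _).mul_left _) fun i => ?_
  have hsmall : ‖-(z * (q : ℂ) ^ (i + N))‖ ≤ 1 / 2 := by
    rw [norm_neg]
    calc ‖z * (q : ℂ) ^ (i + N)‖ ≤ (1/2) * q ^ i := key i
      _ ≤ (1/2) * 1 := by gcongr; exact pow_le_one₀ hq0.le hq1.le
      _ = 1/2 := by ring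
  have hlog := Complex.norm_log_one_add_half_le_self hsmall
  rw [sub_eq_add_neg]
  calc ‖Complex.log (1 + -(z * (q : ℂ) ^ (i + N)))‖ ≤ 3/2 * ‖-(z * (q : ℂ) ^ (i + N))‖ := hlog
    _ ≤ 3/2 * ((1/2) * q ^ i) := by
        rw [norm_neg]
        exact mul_le_mul_of_nonneg_left (key i) (by norm_num)

lemma multF {q : ℝ} (hq0 : 0 < q) (hq1 : q < 1) (z : ℂ) :
    Multipliable fun i : ℕ => (1 : ℂ) - z * (q : ℂ) ^ i := by
  by_cases h : ∀ i : ℕ, (1 : ℂ) - z * (q : ℂ) ^ i ≠ 0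
  · exact Complex.multipliable_of_summable_log (summable_log hq0 hq1 z)
  · push_neg at h
    obtain ⟨i₀, hi₀⟩ := h
    refine ⟨0, ?_⟩
    have hev : ∀ᶠ s : Finset ℕ in atTop, (∏ i ∈ s, ((1:ℂ) - z * (q:ℂ) ^ i)) = 0 := by
      filter_upwards [eventually_ge_atTop ({i₀} : Finset ℕ)] with s hs
      exact Finset.prod_eq_zero (hs (Finset.mem_singleton_self i₀)) hi₀
    exact Tendsto.congr' (hev.mono fun s hs => hs.symm) tendsto_const_nhds

lemma Fne {q : ℝ} (hq0 : 0 < q) (hq1 : q < 1) {z : ℂ}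
    (hz : ∀ i : ℕ, (1 : ℂ) - z * (q : ℂ) ^ i ≠ 0) : qPochInf q z ≠ 0 := by
  have h := Complex.cexp_tsum_eq_tprod (f := fun i => 1 - z * (q : ℂ) ^ i)
    hz (summable_log hq0 hq1 z)
  have h2 := h
  rw [qPochInf, ← h2]
  exact Complex.exp_ne_zero _

lemma Fsplit {q : ℝ} (hq0 : 0 < q) (hq1 : q < 1) (z : ℂ) (N : ℕ) :
    qPochInf q z = (∏ i ∈ range N, ((1:ℂ) - z * (q:ℂ) ^ i)) * qPochInf q ((q:ℂ) ^ N * z) := by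
  have hshift : Multipliable (fun i : ℕ => (1:ℂ) - z * (q:ℂ) ^ (i + N)) :=
    (multF hq0 hq1 ((q:ℂ) ^ N * z)).congr fun i => by rw [pow_add]; ring
  have h1 : (∏' i : ℕ, ((1:ℂ) - ((q:ℂ) ^ N * z) * (q:ℂ) ^ i))
      = ∏' i : ℕ, ((1:ℂ) - z * (q:ℂ) ^ (i + N)) :=
    tprod_congr fun i => by rw [pow_add]; ring
  have h2 := Multipliable.prod_mul_tprod_nat_mul' (f := fun i : ℕ => (1:ℂ) - z * (q:ℂ) ^ i) (k := N) hshift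
  rw [qPochInf, qPochInf, h1]
  exact h2.symm

lemma tendsto_partial {q : ℝ} (hq0 : 0 < q) (hq1 : q < 1) (z : ℂ) :
    Tendsto (fun N => ∏ i ∈ range N, ((1:ℂ) - z * (q:ℂ) ^ i)) atTop (𝓝 (qPochInf q z)) :=
  (multF hq0 hq1 z).hasProd.tendsto_prod_nat

lemma tendsto_qpowC {q : ℝ} (hq0 : 0 < q) (hq1 : q < 1) :
    Tendsto (fun N : ℕ => ((q:ℂ)) ^ N) atTop (𝓝 0) := by
  apply tendsto_pow_atTop_nhds_zero_of_norm_lt_one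
  rw [Complex.norm_eq_abs, Complex.abs_ofReal, abs_of_pos hq0]; exact hq1

lemma tendsto_F_qpow {q : ℝ} (hq0 : 0 < q) (hq1 : q < 1) (z : ℂ) :
    Tendsto (fun N : ℕ => qPochInf q ((q:ℂ) ^ N * z)) atTop (𝓝 1) := by
  obtain ⟨M, hM⟩ : ∃ M : ℕ, Complex.abs ((q:ℂ) ^ M * z) < 1 := by
    have h : Tendsto (fun N : ℕ => Complex.abs ((q:ℂ) ^ N * z)) atTop (𝓝 0) := by
      have h2 : Tendsto (fun N : ℕ => q ^ N * Complex.abs z) atTop (𝓝 (0 * Complex.abs z)) :=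
        (tendsto_pow_atTop_nhds_zero_of_lt_one hq0.le hq1).mul_const _
      rw [zero_mul] at h2
      refine h2.congr fun N => ?_
      rw [map_mul, map_pow, Complex.abs_ofReal, abs_of_pos hq0]
    exact (h.eventually_lt_const one_pos).exists
  set w := (q:ℂ) ^ M * z with hw
  have hfac : ∀ i : ℕ, (1:ℂ) - w * (q:ℂ) ^ i ≠ 0 := factor_ne hq0 hq1 hM
  have hFw : qPochInf q w ≠ 0 := Fne hq0 hq1 hfac
  have h1 : ∀ K : ℕ, qPochInf q ((q:ℂ) ^ K * w)
      = qPochInf q w / ∏ i ∈ range K, ((1:ℂ) - w * (q:ℂ) ^ i) := by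
    intro K
    have hP : (∏ i ∈ range K, ((1:ℂ) - w * (q:ℂ) ^ i)) ≠ 0 :=
      Finset.prod_ne_zero_iff.mpr fun i _ => hfac i
    rw [eq_div_iff hP, mul_comm]
    exact (Fsplit hq0 hq1 w K).symm
  have h2 : Tendsto (fun K : ℕ => qPochInf q ((q:ℂ) ^ K * w)) atTop (𝓝 1) := by
    have h3 := (tendsto_const_nhds (x := qPochInf q w) (f := atTop (α := ℕ))).div
      (tendsto_partial hq0 hq1 w) hFw
    rw [div_self hFw] at h3
    exact h3.congr fun K => (h1 K).symm
  rw [← Filter.tendsto_add_atTop_iff_nat M]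
  refine h2.congr fun K => ?_
  rw [hw, ← mul_assoc, ← pow_add]

/-! ### The coefficients -/

noncomputable def aCoef (q : ℝ) (α β : ℂ) (k : ℕ) : ℂ :=
  β ^ k * (∏ m ∈ Finset.range k, (1 - (q : ℂ) ^ m * α / β)) /
    ∏ m ∈ Finset.range k, (1 - (q : ℂ) ^ (m + 1))

lemma one_sub_qpow_ne {q : ℝ} (hq0 : 0 < q) (hq1 : q < 1) (k : ℕ) :
    (1 : ℂ) - (q:ℂ) ^ (k + 1) ≠ 0 := by
  intro h
  have h1 : ((q:ℂ)) ^ (k+1) = 1 := by linear_combination -h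
  have h2 : (q:ℝ) ^ (k+1) = 1 := by exact_mod_cast h1
  have h3 : (q:ℝ) ^ (k+1) < 1 := pow_lt_one₀ hq0.le hq1 (Nat.succ_ne_zero k)
  linarith

lemma aCoef_zero (q : ℝ) (α β : ℂ) : aCoef q α β 0 = 1 := by simp [aCoef]

lemma aCoef_succ {q : ℝ} (hq0 : 0 < q) (hq1 : q < 1) {α β : ℂ} (hβ : β ≠ 0) (k : ℕ) :
    aCoef q α β (k + 1) * (1 - (q:ℂ) ^ (k + 1)) = aCoef q α β k * (β - α * (q:ℂ) ^ k) := by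
  have hne := one_sub_qpow_ne hq0 hq1 k
  have hd : (∏ m ∈ range k, ((1:ℂ) - (q:ℂ) ^ (m+1))) ≠ 0 :=
    Finset.prod_ne_zero_iff.mpr fun m _ => one_sub_qpow_ne hq0 hq1 m
  have hx : β * (1 - (q:ℂ) ^ k * α / β) = β - α * (q:ℂ) ^ k := by
    field_simp
  have hN : β ^ (k+1) * ((∏ m ∈ range k, (1 - (q:ℂ) ^ m * α / β)) * (1 - (q:ℂ) ^ k * α / β))
      = β ^ k * (∏ m ∈ range k, (1 - (q:ℂ) ^ m * α / β)) * (β - α * (q:ℂ) ^ k) := by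
    rw [pow_succ]
    linear_combination (β ^ k * (∏ m ∈ range k, (1 - (q:ℂ) ^ m * α / β))) * hx
  simp only [aCoef, prod_range_succ]
  rw [div_mul_eq_mul_div, div_mul_eq_mul_div, div_eq_div_iff (mul_ne_zero hd hne) hd]
  linear_combination ((1 - (q:ℂ) ^ (k+1)) * (∏ m ∈ range k, ((1:ℂ) - (q:ℂ) ^ (m+1)))) * hN

lemma summable_norm_aCoef {q : ℝ} (hq0 : 0 < q) (hq1 : q < 1) {α β : ℂ} (hβ : β ≠ 0)
    {y : ℂ} (hy : Complex.abs y * Complex.abs β < 1) :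
    Summable fun k : ℕ => ‖aCoef q α β k * y ^ k‖ := by
  set f : ℕ → ℂ := fun k => aCoef q α β k * y ^ k with hf
  set l : ℝ := (Complex.abs y * Complex.abs β + 1) / 2 with hl
  have hl1 : l < 1 := by rw [hl]; linarith
  have hrec : ∀ k : ℕ, ‖f (k+1)‖
      = ‖f k‖ * (Complex.abs y * (Complex.abs (β - α * (q:ℂ) ^ k)
        / Complex.abs (1 - (q:ℂ) ^ (k+1)))) := by
    intro k
    have hne := one_sub_qpow_ne hq0 hq1 k
    have h1 : f (k+1) * (1 - (q:ℂ) ^ (k+1)) = f k * (y * (β - α * (q:ℂ) ^ k)) := by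
      simp only [hf]
      calc aCoef q α β (k+1) * y ^ (k+1) * (1 - (q:ℂ) ^ (k+1))
          = aCoef q α β (k+1) * (1 - (q:ℂ) ^ (k+1)) * y ^ (k+1) := by ring
        _ = aCoef q α β k * (β - α * (q:ℂ) ^ k) * y ^ (k+1) := by
            rw [aCoef_succ hq0 hq1 hβ k]
        _ = aCoef q α β k * y ^ k * (y * (β - α * (q:ℂ) ^ k)) := by ring
    have h2 : f (k+1) = f k * (y * (β - α * (q:ℂ) ^ k)) / (1 - (q:ℂ) ^ (k+1)) := by
      rw [eq_div_iff hne]; exact h1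
    rw [h2]
    simp only [Complex.norm_eq_abs, map_div₀, map_mul]
    ring
  have hqc := tendsto_qpowC hq0 hq1
  have hc : Tendsto (fun k : ℕ => Complex.abs y * (Complex.abs (β - α * (q:ℂ) ^ k)
      / Complex.abs (1 - (q:ℂ) ^ (k+1)))) atTop (𝓝 (Complex.abs y * Complex.abs β)) := by
    have h1 : Tendsto (fun k : ℕ => β - α * (q:ℂ) ^ k) atTop (𝓝 β) := by
      have := (hqc.const_mul α).const_sub β
      simpa using this
    have h2 : Tendsto (fun k : ℕ => (1:ℂ) - (q:ℂ) ^ (k+1)) atTop (𝓝 1) := by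
      have h3 : Tendsto (fun k : ℕ => ((q:ℂ)) ^ (k+1)) atTop (𝓝 0) :=
        hqc.comp (tendsto_add_atTop_nat 1)
      simpa using h3.const_sub 1
    have h4 : Tendsto (fun k : ℕ => Complex.abs (β - α * (q:ℂ) ^ k)
        / Complex.abs (1 - (q:ℂ) ^ (k+1))) atTop (𝓝 (Complex.abs β / Complex.abs 1)) :=
      ((Complex.continuous_abs.tendsto β).comp h1).div
        ((Complex.continuous_abs.tendsto 1).comp h2) (by simp)
    simp only [map_one, div_one] at h4
    exact h4.const_mul _
  have hev : ∀ᶠ k in atTop, ‖f (k+1)‖ ≤ l * ‖f k‖ := by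
    filter_upwards [hc.eventually_le_const
      (show Complex.abs y * Complex.abs β < l by rw [hl]; linarith)] with k hk
    rw [hrec k, mul_comm l]
    exact mul_le_mul_of_nonneg_left hk (norm_nonneg _)
  apply summable_of_ratio_norm_eventually_le hl1
  filter_upwards [hev] with k hk
  rwa [Real.norm_eq_abs, Real.norm_eq_abs, _root_.abs_of_nonneg (norm_nonneg _),
    _root_.abs_of_nonneg (norm_nonneg _)]

lemma summable_aCoef {q : ℝ} (hq0 : 0 < q) (hq1 : q < 1) {α β : ℂ} (hβ : β ≠ 0)
    {y : ℂ} (hy : Complex.abs y * Complex.abs β < 1) :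
    Summable fun k : ℕ => aCoef q α β k * y ^ k :=
  (summable_norm_aCoef hq0 hq1 hβ hy).of_norm

/-! ### Functional equation of the generating function -/

lemma abs_q_mul_le {q : ℝ} (hq0 : 0 < q) (hq1 : q < 1) (j : ℕ) (y : ℂ) :
    Complex.abs ((q:ℂ) ^ j * y) ≤ Complex.abs y := by
  rw [map_mul, map_pow, Complex.abs_ofReal, abs_of_pos hq0]
  exact mul_le_of_le_one_left (Complex.abs.nonneg y) (pow_le_one₀ hq0.le hq1.le)

lemma gfe {q : ℝ} (hq0 : 0 < q) (hq1 : q < 1) {α β : ℂ} (hβ : β ≠ 0)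
    {y : ℂ} (hy : Complex.abs y * Complex.abs β < 1) :
    (1 - β * y) * ∑' k : ℕ, aCoef q α β k * y ^ k
      = (1 - α * y) * ∑' k : ℕ, aCoef q α β k * ((q:ℂ) * y) ^ k := by
  have hqy : Complex.abs ((q:ℂ) * y) * Complex.abs β < 1 := by
    have h := abs_q_mul_le hq0 hq1 1 y
    rw [pow_one] at h
    calc Complex.abs ((q:ℂ) * y) * Complex.abs β ≤ Complex.abs y * Complex.abs β := by
          gcongr
      _ < 1 := hy
  set u : ℕ → ℂ := fun k => aCoef q α β k * y ^ k with hu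
  set v : ℕ → ℂ := fun k => aCoef q α β k * ((q:ℂ) * y) ^ k with hv
  have Su : Summable u := summable_aCoef hq0 hq1 hβ hy
  have Sv : Summable v := summable_aCoef hq0 hq1 hβ hqy
  have key : ∑' k, (u k - v k) = ∑' k, (β * y * u k - α * y * v k) := by
    rw [Summable.tsum_eq_zero_add (Su.sub Sv)]
    have h0 : u 0 - v 0 = 0 := by simp [hu, hv]
    rw [h0, zero_add]
    refine tsum_congr fun k => ?_
    have hrec := aCoef_succ (α := α) hq0 hq1 hβ k
    simp only [hu, hv]
    have hqe : ((q:ℂ) * y) ^ (k+1) = (q:ℂ) ^ (k+1) * y ^ (k+1) := mul_pow _ _ _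
    have hqe' : ((q:ℂ) * y) ^ k = (q:ℂ) ^ k * y ^ k := mul_pow _ _ _
    rw [hqe, hqe']
    linear_combination y ^ (k+1) * hrec
  have lhs : (1 - β * y) * ∑' k, u k = ∑' k, u k - ∑' k, (β * y * u k) := by
    rw [tsum_mul_left]; ring
  have rhs : (1 - α * y) * ∑' k, v k = ∑' k, v k - ∑' k, (α * y * v k) := by
    rw [tsum_mul_left]; ring
  rw [lhs, rhs]
  have h1 : ∑' k, u k - ∑' k, v k = ∑' k, (β * y * u k) - ∑' k, (α * y * v k) := by
    rw [← Summable.tsum_sub Su Sv, ← Summable.tsum_sub (Su.mul_left _) (Sv.mul_left _), key]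
  linear_combination h1

lemma tendsto_g {q : ℝ} (hq0 : 0 < q) (hq1 : q < 1) {α β : ℂ} (hβ : β ≠ 0)
    {y : ℂ} (hy : Complex.abs y * Complex.abs β < 1) :
    Tendsto (fun N : ℕ => ∑' k : ℕ, aCoef q α β k * ((q:ℂ) ^ N * y) ^ k) atTop (𝓝 1) := by
  have hlim : Tendsto (fun N : ℕ => ∑' k : ℕ, aCoef q α β k * ((q:ℂ) ^ N * y) ^ k) atTop
      (𝓝 (∑' k : ℕ, if k = 0 then (1:ℂ) else 0)) := by
    apply tendsto_tsum_of_dominated_convergence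
      (bound := fun k => ‖aCoef q α β k * y ^ k‖)
    · exact summable_norm_aCoef hq0 hq1 hβ hy
    · intro k
      rcases Nat.eq_zero_or_pos k with hk | hk
      · subst hk
        simpa [aCoef_zero] using (tendsto_const_nhds : Tendsto (fun _ : ℕ => (1:ℂ)) atTop _)
      · have hk0 : k ≠ 0 := hk.ne'
        simp only [if_neg hk0]
        have hz : Tendsto (fun N : ℕ => (q:ℂ) ^ N * y) atTop (𝓝 0) := by
          have := (tendsto_qpowC hq0 hq1).mul_const y
          simpa using this
        have hzk : Tendsto (fun N : ℕ => ((q:ℂ) ^ N * y) ^ k) atTop (𝓝 0) := by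
          have hp := (continuous_pow k).tendsto (0 : ℂ)
          rw [zero_pow hk0] at hp
          exact hp.comp hz
        simpa using hzk.const_mul (aCoef q α β k)
    · filter_upwards with N
      intro k
      rw [norm_mul, norm_mul]
      gcongr
      rw [norm_pow, norm_pow]
      gcongr
      exact abs_q_mul_le hq0 hq1 N y
  have h1 : (∑' k : ℕ, if k = 0 then (1:ℂ) else 0) = 1 := by
    rw [tsum_eq_single 0 (fun k hk => if_neg hk)]
    simp
  rwa [h1] at hlim

/-! ### The q-binomial theorem -/

lemma feq {q : ℝ} (hq0 : 0 < q) (hq1 : q < 1) {α β : ℂ} (hβ : β ≠ 0)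
    {y : ℂ} (hy : Complex.abs y * Complex.abs β < 1) :
    qPochInf q (α * y) / qPochInf q (β * y) = ∑' k : ℕ, aCoef q α β k * y ^ k := by
  have hβy : Complex.abs (β * y) < 1 := by
    rw [map_mul, mul_comm]; exact hy
  have habsN : ∀ N : ℕ, Complex.abs (β * ((q:ℂ) ^ N * y)) < 1 := by
    intro N
    calc Complex.abs (β * ((q:ℂ) ^ N * y))
        = Complex.abs ((q:ℂ) ^ N * y) * Complex.abs β := by rw [map_mul, mul_comm]
      _ ≤ Complex.abs y * Complex.abs β := by gcongr; exact abs_q_mul_le hq0 hq1 N y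
      _ < 1 := hy
  set g : ℂ → ℂ := fun w => ∑' k : ℕ, aCoef q α β k * w ^ k with hg
  set A : ℕ → ℂ := fun N => ∏ i ∈ range N, ((1:ℂ) - (α * y) * (q:ℂ) ^ i) with hA
  set B : ℕ → ℂ := fun N => ∏ i ∈ range N, ((1:ℂ) - (β * y) * (q:ℂ) ^ i) with hB
  have e1 : ∀ N : ℕ, qPochInf q (α * y) = A N * qPochInf q (α * ((q:ℂ) ^ N * y)) := by
    intro N
    rw [Fsplit hq0 hq1 (α * y) N]
    congr 2
    ring
  have e2 : ∀ N : ℕ, qPochInf q (β * y) = B N * qPochInf q (β * ((q:ℂ) ^ N * y)) := by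
    intro N
    rw [Fsplit hq0 hq1 (β * y) N]
    congr 2
    ring
  have claim2 : ∀ N : ℕ, g y * B N = A N * g ((q:ℂ) ^ N * y) := by
    intro N
    induction N with
    | zero => simp [hA, hB, hg]
    | succ N ih =>
      have hyN : Complex.abs ((q:ℂ) ^ N * y) * Complex.abs β < 1 :=
        lt_of_le_of_lt (by gcongr; exact abs_q_mul_le hq0 hq1 N y) hy
      have hstep := gfe (α := α) hq0 hq1 hβ hyN
      have hqq : (q:ℂ) * ((q:ℂ) ^ N * y) = (q:ℂ) ^ (N+1) * y := by rw [pow_succ]; ring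
      rw [hqq] at hstep
      have hA' : A (N+1) = A N * (1 - (α * y) * (q:ℂ) ^ N) := prod_range_succ _ _
      have hB' : B (N+1) = B N * (1 - (β * y) * (q:ℂ) ^ N) := prod_range_succ _ _
      calc g y * B (N+1) = (g y * B N) * (1 - (β * y) * (q:ℂ) ^ N) := by rw [hB']; ring
        _ = A N * g ((q:ℂ) ^ N * y) * (1 - (β * y) * (q:ℂ) ^ N) := by rw [ih]
        _ = A N * ((1 - β * ((q:ℂ) ^ N * y)) * g ((q:ℂ) ^ N * y)) := by ring
        _ = A N * ((1 - α * ((q:ℂ) ^ N * y)) * g ((q:ℂ) ^ (N+1) * y)) := by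
            have hs2 : g ((q:ℂ) ^ N * y)
                = ∑' (k : ℕ), aCoef q α β k * ((q:ℂ) ^ N * y) ^ k := rfl
            have hs3 : g ((q:ℂ) ^ (N+1) * y)
                = ∑' (k : ℕ), aCoef q α β k * ((q:ℂ) ^ (N+1) * y) ^ k := rfl
            rw [hs2, hs3, hstep]
        _ = A (N+1) * g ((q:ℂ) ^ (N+1) * y) := by rw [hA']; ring
  have key : ∀ N : ℕ, qPochInf q (α * y) - g y * qPochInf q (β * y)
      = A N * (qPochInf q (α * ((q:ℂ) ^ N * y))
          - g ((q:ℂ) ^ N * y) * qPochInf q (β * ((q:ℂ) ^ N * y))) := by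
    intro N
    calc qPochInf q (α * y) - g y * qPochInf q (β * y)
        = A N * qPochInf q (α * ((q:ℂ) ^ N * y))
          - (g y * B N) * qPochInf q (β * ((q:ℂ) ^ N * y)) := by
          rw [e1 N, e2 N]; ring
      _ = A N * qPochInf q (α * ((q:ℂ) ^ N * y))
          - (A N * g ((q:ℂ) ^ N * y)) * qPochInf q (β * ((q:ℂ) ^ N * y)) := by
          rw [claim2 N]
      _ = A N * (qPochInf q (α * ((q:ℂ) ^ N * y))
          - g ((q:ℂ) ^ N * y) * qPochInf q (β * ((q:ℂ) ^ N * y))) := by ring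
  have hlimA : Tendsto A atTop (𝓝 (qPochInf q (α * y))) := tendsto_partial hq0 hq1 (α * y)
  have hlimFα : Tendsto (fun N : ℕ => qPochInf q (α * ((q:ℂ) ^ N * y))) atTop (𝓝 1) := by
    refine (tendsto_F_qpow hq0 hq1 (α * y)).congr fun N => ?_
    congr 1
    ring
  have hlimFβ : Tendsto (fun N : ℕ => qPochInf q (β * ((q:ℂ) ^ N * y))) atTop (𝓝 1) := by
    refine (tendsto_F_qpow hq0 hq1 (β * y)).congr fun N => ?_
    congr 1
    ring
  have hlimg : Tendsto (fun N : ℕ => g ((q:ℂ) ^ N * y)) atTop (𝓝 1) := tendsto_g hq0 hq1 hβ hy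
  have hRHS : Tendsto (fun N : ℕ => A N * (qPochInf q (α * ((q:ℂ) ^ N * y))
      - g ((q:ℂ) ^ N * y) * qPochInf q (β * ((q:ℂ) ^ N * y)))) atTop
      (𝓝 (qPochInf q (α * y) * (1 - 1 * 1))) :=
    hlimA.mul (hlimFα.sub (hlimg.mul hlimFβ))
  have h0 : qPochInf q (α * y) - g y * qPochInf q (β * y) = 0 := by
    have hconst : Tendsto (fun _ : ℕ => qPochInf q (α * y) - g y * qPochInf q (β * y)) atTop
        (𝓝 (qPochInf q (α * y) - g y * qPochInf q (β * y))) := tendsto_const_nhds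
    have h2 := hRHS.congr fun N => (key N).symm
    have h3 := tendsto_nhds_unique hconst h2
    rw [h3]; ring
  have hFβ0 : qPochInf q (β * y) ≠ 0 := Fne hq0 hq1 (factor_ne hq0 hq1 hβy)
  rw [div_eq_iff hFβ0]
  linear_combination h0

end Stmt17

/-- Residue evaluation. -/
theorem stmt17 (q : ℝ) (hq0 : 0 < q) (hq1 : q < 1) (α β : ℂ) (hβ : β ≠ 0)
    (n : ℕ) (R : ℝ) (hR0 : 0 < R) (hR1 : R < 1 / ‖β‖) :
    (1 / (2 * (Real.pi : ℂ) * Complex.I)) *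
        (∮ y in C(0, R), (y ^ n)⁻¹ * (qPochInf q (α * y) / qPochInf q (β * y)) / y) =
      β ^ n * (∏ m ∈ Finset.range n, (1 - (q : ℂ) ^ m * α / β)) /
        ∏ m ∈ Finset.range n, (1 - (q : ℂ) ^ (m + 1)) := by
  classical
  have hb : 0 < Complex.abs β := Complex.abs.pos hβ
  have hRβ : R * Complex.abs β < 1 := (lt_div_iff₀ hb).mp hR1
  set T : ℕ → ℂ → ℂ :=
    fun k z => Stmt17.aCoef q α β k * z ^ ((k : ℤ) - (n : ℤ) - 1) with hT
  have habsR : Complex.abs ((R : ℂ)) * Complex.abs β < 1 := by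
    rw [Complex.abs_ofReal, abs_of_pos hR0]; exact hRβ
  have hsn : Summable (fun k : ℕ => ‖Stmt17.aCoef q α β k * ((R : ℂ)) ^ k‖) :=
    Stmt17.summable_norm_aCoef hq0 hq1 hβ habsR
  have hsum_b : Summable (fun k : ℕ => ‖Stmt17.aCoef q α β k‖ * R ^ ((k : ℤ) - (n : ℤ) - 1)) := by
    have h := hsn.mul_left (R ^ (-(n : ℤ) - 1))
    refine h.congr fun k => ?_
    rw [norm_mul, norm_pow, Complex.norm_real, Real.norm_eq_abs, abs_of_pos hR0,
      show ((k : ℤ) - (n : ℤ) - 1) = (k : ℤ) + (-(n : ℤ) - 1) by ring,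
      zpow_add₀ hR0.ne', zpow_natCast]
    ring
  have hnormT : ∀ (k : ℕ) (z : ℂ), Complex.abs z = R →
      ‖T k z‖ = ‖Stmt17.aCoef q α β k‖ * R ^ ((k : ℤ) - (n : ℤ) - 1) := by
    intro k z hz
    rw [hT]
    simp only []
    have hz' : ‖z‖ = R := by rw [Complex.norm_eq_abs]; exact hz
    rw [norm_mul, norm_zpow, hz']
  have hTsum : ∀ z : ℂ, Complex.abs z = R → Summable fun k : ℕ => T k z := by
    intro z hz
    exact Summable.of_norm (hsum_b.congr fun k => (hnormT k z hz).symm)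
  have habs_cm : ∀ θ : ℝ, Complex.abs (circleMap 0 R θ) = R := by
    intro θ
    rw [abs_circleMap_zero, abs_of_pos hR0]
  -- Step 1: rewrite the integrand as a series on the circle
  have hcongr : (∮ y in C(0, R), (y ^ n)⁻¹ * (qPochInf q (α * y) / qPochInf q (β * y)) / y)
      = ∮ z in C(0, R), ∑' k : ℕ, T k z := by
    refine circleIntegral.integral_congr hR0.le fun z hz => ?_
    have hzR : Complex.abs z = R := by
      rw [← Complex.norm_eq_abs]
      exact mem_sphere_zero_iff_norm.mp hz
    have hz0 : z ≠ 0 := by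
      intro h
      rw [h, map_zero] at hzR
      exact hR0.ne hzR
    have hzy : Complex.abs z * Complex.abs β < 1 := by rw [hzR]; exact hRβ
    rw [Stmt17.feq (α := α) hq0 hq1 hβ hzy, ← tsum_mul_left, ← tsum_div_const]
    refine tsum_congr fun k => ?_
    rw [hT]
    simp only []
    rw [show ((k : ℤ) - (n : ℤ) - 1) = (k : ℤ) - ((n : ℤ) + 1) by ring, zpow_sub₀ hz0,
      zpow_natCast, zpow_add₀ hz0, zpow_natCast, zpow_one]
    field_simp
  -- Step 2: termwise integration
  have hHasSum : HasSum (fun k : ℕ => ∮ z in C(0, R), T k z)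
      (∮ z in C(0, R), ∑' k : ℕ, T k z) := by
    simp only [circleIntegral]
    apply intervalIntegral.hasSum_integral_of_dominated_convergence
      (bound := fun (k : ℕ) (_ : ℝ) =>
        R * (‖Stmt17.aCoef q α β k‖ * R ^ ((k : ℤ) - (n : ℤ) - 1)))
    · intro k
      apply Continuous.aestronglyMeasurable
      have hc1 : Continuous (circleMap 0 R) := continuous_circleMap 0 R
      have hne : ∀ θ : ℝ, circleMap 0 R θ ≠ 0 := fun θ => circleMap_ne_center hR0.ne'
      have hc2 : Continuous fun θ : ℝ => (circleMap 0 R θ) ^ ((k : ℤ) - (n : ℤ) - 1) :=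
        hc1.zpow₀ _ fun θ => Or.inl (hne θ)
      simp only [hT, deriv_circleMap]
      exact (hc1.mul continuous_const).smul (continuous_const.mul hc2)
    · intro k
      filter_upwards with θ
      intro _
      rw [norm_smul, deriv_circleMap, hnormT k _ (habs_cm θ)]
      have h1 : ‖circleMap 0 R θ * Complex.I‖ = R := by
        rw [norm_mul, Complex.norm_eq_abs, Complex.norm_eq_abs, Complex.abs_I, mul_one,
          habs_cm θ]
      rw [h1]
    · filter_upwards with θ
      intro _
      exact hsum_b.mul_left R
    · exact intervalIntegrable_const
    · filter_upwards with θ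
      intro _
      exact ((hTsum _ (habs_cm θ)).hasSum).const_smul _
  -- Step 3: evaluate each integral
  have hval : ∀ k : ℕ, (∮ z in C(0, R), T k z)
      = if k = n then 2 * (Real.pi : ℂ) * Complex.I * Stmt17.aCoef q α β n else 0 := by
    intro k
    have hconst : (∮ z in C(0, R), T k z)
        = Stmt17.aCoef q α β k * ∮ z in C(0, R), z ^ ((k : ℤ) - (n : ℤ) - 1) := by
      rw [hT]
      simp only []
      exact circleIntegral.integral_const_mul _ _ _ _
    rcases eq_or_ne k n with rfl | hk
    · rw [if_pos rfl, hconst]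
      have hm : ((k : ℤ) - (k : ℤ) - 1) = -1 := by ring
      rw [hm]
      have h2 := circleIntegral.integral_sub_inv_of_mem_ball
        (Metric.mem_ball_self hR0 (x := (0 : ℂ)))
      simp only [sub_zero] at h2
      have h3 : (∮ z in C(0, R), z ^ (-1 : ℤ)) = ∮ z in C(0, R), z⁻¹ := by
        refine circleIntegral.integral_congr hR0.le fun z _ => ?_
        exact zpow_neg_one z
      rw [h3, h2]
      ring
    · rw [if_neg hk, hconst]
      have hm : ((k : ℤ) - (n : ℤ) - 1) ≠ -1 := by
        intro h
        exact hk (by omega)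
      have h2 := circleIntegral.integral_sub_zpow_of_ne hm 0 0 R
      simp only [sub_zero] at h2
      rw [h2, mul_zero]
  have hIte : HasSum (fun k : ℕ =>
      if k = n then 2 * (Real.pi : ℂ) * Complex.I * Stmt17.aCoef q α β n else 0)
      (2 * (Real.pi : ℂ) * Complex.I * Stmt17.aCoef q α β n) := hasSum_ite_eq n _
  have h4 : HasSum (fun k : ℕ =>
      if k = n then 2 * (Real.pi : ℂ) * Complex.I * Stmt17.aCoef q α β n else 0)
      (∮ z in C(0, R), ∑' k : ℕ, T k z) :=
    hHasSum.congr_fun fun k => (hval k).symm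
  have hval2 : (∮ z in C(0, R), ∑' k : ℕ, T k z)
      = 2 * (Real.pi : ℂ) * Complex.I * Stmt17.aCoef q α β n := h4.unique hIte
  rw [hcongr, hval2]
  have hπ : (2 * (Real.pi : ℂ) * Complex.I) ≠ 0 := by
    simp [Real.pi_ne_zero, Complex.I_ne_zero, Complex.ofReal_ne_zero]
  have hfin : β ^ n * (∏ m ∈ Finset.range n, (1 - (q : ℂ) ^ m * α / β)) /
      ∏ m ∈ Finset.range n, (1 - (q : ℂ) ^ (m + 1)) = Stmt17.aCoef q α β n := rfl
  rw [hfin, one_div, inv_mul_cancel_left₀ hπ]
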